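/- Let P be a probability distribution on a finite set S of actions with feature map φ: S → R^d, and let (a, a') be two independent draws from P. Then for any fixed reference action ā ∈ S with P(ā) ≥ p₀ > 0, E_{(a,a')∼P×P}[(φ(a)−φ(a'))(φ(a)−φ(a'))ᵀ] ⪰ p₀ · Σ_{b∈S} P(b) (φ(b)−φ(ā))(φ(b)−φ(ā))ᵀ in the positive semidefinite order. -/

import Mathlib

open Matrix Finset


lemma psd_vmv {d : ℕ} (v : Fin d → ℝ) : (vecMulVec v v).PosSemidef := by
  rw [vecMulVec_eq (Fin 1)]
  have : replicateCol (Fin 1) v = (replicateRow (Fin 1) v)ᴴ := by ext i j; simp [replicateCol, replicateRow]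
  rw [this]
  exact posSemidef_conjTranspose_mul_self _

lemma psd_smul {d : ℕ} {M : Matrix (Fin d) (Fin d) ℝ} (h : M.PosSemidef) {c : ℝ}
    (hc : 0 ≤ c) : (c • M).PosSemidef := by
  refine ⟨?_, fun x => ?_⟩
  · unfold Matrix.IsHermitian
    rw [conjTranspose_smul, h.1]
    simp
  · exact (h.smul hc).2 x

lemma psd_sum {d m : ℕ} (f : Fin m → Matrix (Fin d) (Fin d) ℝ) (s : Finset (Fin m))
    (h : ∀ i ∈ s, (f i).PosSemidef) : (∑ i ∈ s, f i).PosSemidef := by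
  classical
  induction s using Finset.induction with
  | empty => simp [Matrix.PosSemidef.zero]
  | insert _ _ hx ih =>
    rw [Finset.sum_insert hx]
    exact (h _ (Finset.mem_insert_self _ _)).add (ih fun i hi => h i (Finset.mem_insert_of_mem hi))

/-- The expected outer product of feature differences of two i.i.d. draws
dominates (in the PSD order) the anchored form, up to the anchor probability. -/
theorem stmt_9 (d m : ℕ) (φ : Fin m → Fin d → ℝ)
    (P : Fin m → ℝ) (hP0 : ∀ b, 0 ≤ P b) (hP1 : ∑ b : Fin m, P b = 1)
    (abar : Fin m) (p₀ : ℝ) (hp₀ : 0 < p₀) (habar : p₀ ≤ P abar) :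
    ((∑ i : Fin m, ∑ k : Fin m, (P i * P k) • vecMulVec (φ i - φ k) (φ i - φ k)) -
      p₀ • ∑ b : Fin m, P b • vecMulVec (φ b - φ abar) (φ b - φ abar)).PosSemidef := by
  classical
  set V : Fin m → Fin m → Matrix (Fin d) (Fin d) ℝ :=
    fun i k => vecMulVec (φ i - φ k) (φ i - φ k) with hV
  have key : ((∑ i : Fin m, ∑ k : Fin m, (P i * P k) • V i k) -
      p₀ • ∑ b : Fin m, P b • V b abar) =
      ∑ i : Fin m, ((∑ k ∈ Finset.univ.erase abar, (P i * P k) • V i k)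
        + (P i * (P abar - p₀)) • V i abar) := by
    rw [Finset.smul_sum, ← Finset.sum_sub_distrib]
    refine Finset.sum_congr rfl fun i _ => ?_
    rw [← Finset.sum_erase_add _ _ (Finset.mem_univ abar), smul_smul, add_sub_assoc]
    congr 1
    rw [← sub_smul]
    ring_nf
  rw [key]
  refine psd_sum _ _ fun i _ => Matrix.PosSemidef.add ?_ ?_
  · exact psd_sum _ _ fun k _ => psd_smul (psd_vmv _) (mul_nonneg (hP0 i) (hP0 k))
  · exact psd_smul (psd_vmv _) (mul_nonneg (hP0 i) (by linarith))
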